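/- Let (K_m) and (b_m) be bounded complex sequences, λ > 0, and λ_n = −i·(n(g+n²)tanh(hn))^{1/2}. Define k_n := λ·∑_{m ≠ n} K_m b_m/(λ_m − λ_n + λ) (the series converges absolutely). Then for every ε ∈ [0, 1/2) the sequence (k_n · n^ε) is bounded. -/

import Mathlib

set_option maxHeartbeats 1000000

open Real in
lemma tanh_mono {x y : ℝ} (hxy : x ≤ y) : Real.tanh x ≤ Real.tanh y := by
  rw [Real.tanh_eq_sinh_div_cosh, Real.tanh_eq_sinh_div_cosh,
    div_le_div_iff₀ (Real.cosh_pos x) (Real.cosh_pos y)]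
  have := Real.sinh_sub x y
  have h2 : Real.sinh (x - y) ≤ 0 := by
    rw [Real.sinh_nonpos_iff]; linarith
  nlinarith [Real.cosh_pos x, Real.cosh_pos y]

lemma tanh_nonneg {x : ℝ} (hx : 0 ≤ x) : 0 ≤ Real.tanh x := by
  simpa using tanh_mono hx


noncomputable def muF (g h : ℝ) (k : ℕ) : ℝ :=
  Real.sqrt ((k : ℝ) * (g + (k : ℝ) ^ 2) * Real.tanh (h * k))

lemma tanh_le_one (x : ℝ) : Real.tanh x ≤ 1 := by
  have := Real.cosh_sub_sinh x
  have he : 0 < Real.exp (-x) := Real.exp_pos _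
  rw [Real.tanh_eq_sinh_div_cosh, div_le_one (Real.cosh_pos _)]
  linarith

lemma fF_nonneg {g h : ℝ} (hg : 0 < g) (hh : 0 < h) (k : ℕ) :
    0 ≤ (k : ℝ) * (g + (k : ℝ) ^ 2) * Real.tanh (h * k) := by
  have h1 : (0:ℝ) ≤ k := Nat.cast_nonneg k
  have h2 : 0 ≤ Real.tanh (h * k) := tanh_nonneg (by positivity)
  have : (0:ℝ) ≤ g + (k:ℝ)^2 := by positivity
  positivity

lemma fF_le {g h : ℝ} (hg : 0 < g) (hh : 0 < h) (k : ℕ) :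
    (k : ℝ) * (g + (k : ℝ) ^ 2) * Real.tanh (h * k) ≤ (g + 1) * (k:ℝ)^3 := by
  have h2 : Real.tanh (h * k) ≤ 1 := tanh_le_one _
  have h1 : (0:ℝ) ≤ k := Nat.cast_nonneg k
  have h3 : 0 ≤ Real.tanh (h * k) := tanh_nonneg (by positivity)
  have hnn : (0:ℝ) ≤ (k:ℝ) * (g + (k:ℝ)^2) := by positivity
  have h4 : (k : ℝ) * (g + (k : ℝ) ^ 2) * Real.tanh (h * k) ≤ (k : ℝ) * (g + (k : ℝ) ^ 2) :=
    mul_le_of_le_one_right hnn h2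
  have h5 : (k : ℝ) * (g + (k : ℝ) ^ 2) ≤ (g+1) * (k:ℝ)^3 := by
    rcases Nat.eq_zero_or_pos k with rfl | hk
    · simp
    · have hk1 : (1:ℝ) ≤ k := by exact_mod_cast hk
      have : (k:ℝ) ≤ (k:ℝ)^3 := by nlinarith
      nlinarith [mul_le_mul_of_nonneg_left this hg.le]
  linarith

lemma mu_le {g h : ℝ} (hg : 0 < g) (hh : 0 < h) (k : ℕ) :
    muF g h k ≤ Real.sqrt (g+1) * Real.sqrt ((k:ℝ)^3) := by
  rw [muF, ← Real.sqrt_mul (by linarith)]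
  exact Real.sqrt_le_sqrt (fF_le hg hh k)

lemma mu_gap {g h : ℝ} (hg : 0 < g) (hh : 0 < h) {j : ℕ} (hj : 1 ≤ j) :
    Real.tanh h / (2 * Real.sqrt (g+1)) * Real.sqrt j ≤ muF g h (j+1) - muF g h j := by
  set a := (j : ℝ) * (g + (j : ℝ) ^ 2) * Real.tanh (h * j) with ha
  set b := ((j+1 : ℕ) : ℝ) * (g + ((j+1:ℕ) : ℝ) ^ 2) * Real.tanh (h * (j+1:ℕ)) with hb
  have hj1 : (1:ℝ) ≤ j := by exact_mod_cast hj
  have hth : 0 < Real.tanh h := by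
    rw [Real.tanh_eq_sinh_div_cosh]
    exact div_pos (by rwa [Real.sinh_pos_iff]) (Real.cosh_pos _)
  have ha0 : 0 ≤ a := fF_nonneg hg hh j
  have hcast : ((j+1:ℕ):ℝ) = (j:ℝ)+1 := by push_cast; ring
  have hT1 : Real.tanh h ≤ Real.tanh (h * j) := by
    apply tanh_mono; nlinarith
  have hT2 : Real.tanh (h * j) ≤ Real.tanh (h * (j+1:ℕ)) := by
    apply tanh_mono; rw [hcast]; nlinarith
  have hba : 3 * Real.tanh h * (j:ℝ)^2 ≤ b - a := by
    have hPnn : 0 ≤ (j:ℝ) * (g + (j:ℝ)^2) := by positivity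
    have e1 : a ≤ (j:ℝ) * (g + (j:ℝ)^2) * Real.tanh (h * (j+1:ℕ)) := by
      rw [ha]; exact mul_le_mul_of_nonneg_left hT2 hPnn
    have e2 : ((j:ℝ)+1) * (g + ((j:ℝ)+1)^2) - (j:ℝ) * (g + (j:ℝ)^2) ≥ 3*(j:ℝ)^2 := by nlinarith
    have hTpos : Real.tanh h ≤ Real.tanh (h * (j+1:ℕ)) := le_trans hT1 hT2
    have hT1' : 0 < Real.tanh (h * (j+1:ℕ)) := lt_of_lt_of_le hth hTpos
    have e3 : 3*(j:ℝ)^2 * Real.tanh (h*(j+1:ℕ)) ≤ b - (j:ℝ) * (g + (j:ℝ)^2) * Real.tanh (h * (j+1:ℕ)) := by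
      have e3' := mul_le_mul_of_nonneg_right e2 hT1'.le
      rw [sub_mul, hcast] at e3'
      rw [hb, hcast]; linarith
    have e4 : 3 * Real.tanh h * (j:ℝ)^2 ≤ 3*(j:ℝ)^2 * Real.tanh (h*(j+1:ℕ)) := by
      have := mul_le_mul_of_nonneg_right hTpos (by positivity : (0:ℝ) ≤ 3*(j:ℝ)^2)
      nlinarith
    linarith
  have hb0 : 0 ≤ b := fF_nonneg hg hh (j+1)
  have hsum_pos : 0 < Real.sqrt a + Real.sqrt b := by
    have h30 : 0 < 3 * Real.tanh h * (j:ℝ)^2 := by positivity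
    have hbpos : 0 < b := by linarith
    have := Real.sqrt_pos.2 hbpos
    have := Real.sqrt_nonneg a
    linarith
  have key : Real.sqrt b - Real.sqrt a = (b - a) / (Real.sqrt a + Real.sqrt b) := by
    rw [eq_div_iff (ne_of_gt hsum_pos)]
    have h1 : Real.sqrt a ^ 2 = a := Real.sq_sqrt ha0
    have h2 : Real.sqrt b ^ 2 = b := Real.sq_sqrt hb0
    nlinarith
  have hden : Real.sqrt a + Real.sqrt b ≤ 2 * (Real.sqrt (g+1) * Real.sqrt (((j:ℝ)+1)^3)) := by
    have l1 := mu_le hg hh j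
    have l2 := mu_le hg hh (j+1)
    rw [muF] at l1 l2
    rw [hcast] at l2
    have hmono : Real.sqrt ((j:ℝ)^3) ≤ Real.sqrt (((j:ℝ)+1)^3) := by
      apply Real.sqrt_le_sqrt; nlinarith
    have hg1 : 0 ≤ Real.sqrt (g+1) := Real.sqrt_nonneg _
    have : Real.sqrt (g+1) * Real.sqrt ((j:ℝ)^3) ≤ Real.sqrt (g+1) * Real.sqrt (((j:ℝ)+1)^3) :=
      mul_le_mul_of_nonneg_left hmono hg1
    rw [ha, hb, hcast]
    linarith [l1, l2]
  -- so far: muF(j+1) - muF j = sqrt b - sqrt a ≥ (3 tanh h j²) / (2 √(g+1) √((j+1)³))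
  have hmain : Real.tanh h / (2 * Real.sqrt (g+1)) * Real.sqrt j
      ≤ (b - a) / (Real.sqrt a + Real.sqrt b) := by
    have h30 : 0 < 3 * Real.tanh h * (j:ℝ)^2 := by positivity
    have hba0 : 0 ≤ b - a := by linarith
    have step1 : (b-a) / (2 * (Real.sqrt (g+1) * Real.sqrt (((j:ℝ)+1)^3)))
        ≤ (b - a) / (Real.sqrt a + Real.sqrt b) := by
      gcongr
    refine le_trans ?_ step1
    rw [le_div_iff₀ (by positivity)]
    -- tanh h/(2√(g+1)) * √j * (2 √(g+1) √((j+1)³)) ≤ b - a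
    have hsg : 0 < Real.sqrt (g+1) := Real.sqrt_pos.2 (by linarith)
    have lhs_eq : Real.tanh h / (2 * Real.sqrt (g+1)) * Real.sqrt j *
        (2 * (Real.sqrt (g+1) * Real.sqrt (((j:ℝ)+1)^3)))
        = Real.tanh h * (Real.sqrt j * Real.sqrt (((j:ℝ)+1)^3)) := by
      field_simp
    rw [lhs_eq]
    have hprod : Real.sqrt j * Real.sqrt (((j:ℝ)+1)^3) ≤ 3 * (j:ℝ)^2 := by
      rw [← Real.sqrt_mul (by positivity)]
      have p1 : (j:ℝ)^1 ≤ (j:ℝ)^4 := pow_le_pow_right₀ hj1 (by norm_num)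
      have p2 : (j:ℝ)^2 ≤ (j:ℝ)^4 := pow_le_pow_right₀ hj1 (by norm_num)
      have p3 : (j:ℝ)^3 ≤ (j:ℝ)^4 := pow_le_pow_right₀ hj1 (by norm_num)
      have h9 : (j:ℝ) * ((j:ℝ)+1)^3 ≤ (3*(j:ℝ)^2)^2 := by nlinarith [p1, p2, p3]
      calc Real.sqrt ((j:ℝ) * ((j:ℝ)+1)^3) ≤ Real.sqrt ((3*(j:ℝ)^2)^2) := Real.sqrt_le_sqrt h9
        _ = 3*(j:ℝ)^2 := Real.sqrt_sq (by positivity)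
    have := mul_le_mul_of_nonneg_left hprod hth.le
    nlinarith
  have hfinal : muF g h (j+1) - muF g h j = Real.sqrt b - Real.sqrt a := by
    rw [muF, muF, ha, hb]
  rw [hfinal, key]
  exact hmain

lemma mu_telescope {g h : ℝ} (hg : 0 < g) (hh : 0 < h) {m n : ℕ} (hm : 1 ≤ m) (hmn : m < n) :
    Real.tanh h / (2 * Real.sqrt (g+1)) * ∑ j ∈ Finset.Ico m n, Real.sqrt (j:ℝ)
      ≤ muF g h n - muF g h m := by
  induction n, hmn using Nat.le_induction with
  | base =>
      rw [Finset.sum_Ico_eq_sum_range]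
      have he : m + 1 - m = 1 := by omega
      rw [he]
      simp only [Finset.range_one, Finset.sum_singleton, Nat.add_zero]
      exact mu_gap hg hh hm
  | succ n hn ih =>
      have hmn' : m ≤ n := le_of_lt hn
      rw [Finset.sum_Ico_succ_top hmn', mul_add]
      have g2 := mu_gap hg hh (le_trans hm hmn')
      linarith

lemma sum_cast_ge {m n : ℕ} (hm : 1 ≤ m) (hmn : m ≤ n) :
    ((n:ℝ) - m) * n / 2 ≤ ∑ j ∈ Finset.Ico m n, (j:ℝ) := by
  induction n, hmn using Nat.le_induction with
  | base => simp
  | succ n hn ih =>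
      rw [Finset.sum_Ico_succ_top hn]
      have h1 : (m:ℝ) ≤ n := by exact_mod_cast hn
      have h2 : (1:ℝ) ≤ m := by exact_mod_cast hm
      push_cast
      push_cast at ih
      nlinarith

lemma mu_diff {g h : ℝ} (hg : 0 < g) (hh : 0 < h) {m n : ℕ} (hm : 1 ≤ m) (hmn : m < n) :
    Real.tanh h / (2 * Real.sqrt (g+1)) * (((n:ℝ) - m) * Real.sqrt n / 2)
      ≤ muF g h n - muF g h m := by
  refine le_trans ?_ (mu_telescope hg hh hm hmn)
  have hc : 0 < Real.tanh h / (2 * Real.sqrt (g+1)) := by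
    have hth : 0 < Real.tanh h := by
      rw [Real.tanh_eq_sinh_div_cosh]
      exact div_pos (by rwa [Real.sinh_pos_iff]) (Real.cosh_pos _)
    have : 0 < Real.sqrt (g+1) := Real.sqrt_pos.2 (by linarith)
    positivity
  apply mul_le_mul_of_nonneg_left _ hc.le
  -- (n-m)√n/2 ≤ ∑ √j
  have hn0 : 0 < (n:ℝ) := by
    have : 0 < n := by omega
    exact_mod_cast this
  have hsn : 0 < Real.sqrt n := Real.sqrt_pos.2 hn0
  have step1 : ∑ j ∈ Finset.Ico m n, (j:ℝ) / Real.sqrt n ≤ ∑ j ∈ Finset.Ico m n, Real.sqrt (j:ℝ) := by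
    apply Finset.sum_le_sum
    intro j hj
    rw [div_le_iff₀ hsn]
    have hjn : (j:ℝ) ≤ n := by
      have := (Finset.mem_Ico.1 hj).2
      exact_mod_cast this.le
    have hj0 : (0:ℝ) ≤ j := Nat.cast_nonneg _
    calc (j:ℝ) = Real.sqrt j * Real.sqrt j := (Real.mul_self_sqrt hj0).symm
      _ ≤ Real.sqrt j * Real.sqrt n := by
          exact mul_le_mul_of_nonneg_left (Real.sqrt_le_sqrt hjn) (Real.sqrt_nonneg _)
  rw [← Finset.sum_div] at step1
  refine le_trans ?_ step1
  rw [le_div_iff₀ hsn]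
  have hgauss := sum_cast_ge hm hmn.le
  have hnn : Real.sqrt n * Real.sqrt n = (n:ℝ) := Real.mul_self_sqrt hn0.le
  have hmr : (1:ℝ) ≤ m := by exact_mod_cast hm
  have hnm : (m:ℝ) < n := by exact_mod_cast hmn
  nlinarith [Finset.sum_nonneg (fun j (_ : j ∈ Finset.Ico m n) => Nat.cast_nonneg j : ∀ j ∈ Finset.Ico m n, (0:ℝ) ≤ j)]

lemma harm_bound (n : ℕ) : ∑ i ∈ Finset.range n, 1/((i:ℝ)+1) ≤ 1 + Real.log n := by
  have h := harmonic_le_one_add_log n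
  have he : (harmonic n : ℝ) = ∑ i ∈ Finset.range n, 1/((i:ℝ)+1) := by
    rw [harmonic]
    push_cast
    simp [one_div]
  linarith [he ▸ h]

lemma sum_inv_reflect (n : ℕ) :
    ∑ m ∈ Finset.range n, 1/((n:ℝ) - m) = ∑ i ∈ Finset.range n, 1/((i:ℝ)+1) := by
  rw [← Finset.sum_range_reflect (fun i => 1/((i:ℝ)+1)) n]
  apply Finset.sum_congr rfl
  intro i hi
  have hi' : i < n := Finset.mem_range.1 hi
  have h1 : n - 1 - i = n - (i+1) := by omega
  have h2 : ((n - (i+1) : ℕ) : ℝ) = (n:ℝ) - ((i:ℝ)+1) := by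
    have : i + 1 ≤ n := hi'
    push_cast [Nat.cast_sub this]
    ring
  rw [h1, h2]
  ring_nf

lemma sum_inv_shift (n : ℕ) :
    ∑ m ∈ Finset.Ico (n+1) (2*n+1), 1/((m:ℝ) - n) = ∑ i ∈ Finset.range n, 1/((i:ℝ)+1) := by
  rw [Finset.sum_Ico_eq_sum_range]
  have he : 2*n+1 - (n+1) = n := by omega
  rw [he]
  apply Finset.sum_congr rfl
  intro i _
  push_cast
  ring_nf

lemma tail_sum_bound {N : ℕ} (hN : 1 ≤ N) (M : ℕ) (hM : N ≤ M) :
    ∑ m ∈ Finset.Ico (N+1) (M+1), 1/((m:ℝ) * Real.sqrt m)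
      ≤ 2/Real.sqrt N - 2/Real.sqrt M := by
  induction M, hM using Nat.le_induction with
  | base => simp
  | succ M hM ih =>
      rw [Finset.sum_Ico_succ_top (by omega)]
      have hM1 : (1:ℝ) ≤ M := by exact_mod_cast le_trans hN hM
      have key : 1/(((M+1:ℕ):ℝ) * Real.sqrt ((M+1:ℕ):ℝ)) ≤ 2/Real.sqrt M - 2/Real.sqrt ((M:ℝ)+1) := by
        set u := Real.sqrt (M:ℝ) with hu
        set v := Real.sqrt ((M:ℝ)+1) with hv
        have hu0 : 0 < u := Real.sqrt_pos.2 (by linarith)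
        have hv0 : 0 < v := Real.sqrt_pos.2 (by linarith)
        have huv : u ≤ v := Real.sqrt_le_sqrt (by linarith)
        have hu2 : u^2 = (M:ℝ) := Real.sq_sqrt (by linarith)
        have hv2 : v^2 = (M:ℝ)+1 := Real.sq_sqrt (by linarith)
        have hcast : ((M+1:ℕ):ℝ) = (M:ℝ)+1 := by push_cast; ring
        have hsq : ((M:ℝ)+1) * Real.sqrt ((M:ℝ)+1) = v^2 * v := by
          rw [hv, Real.sq_sqrt (by linarith : (0:ℝ) ≤ (M:ℝ)+1)]
        rw [hcast, hsq]
        rw [div_sub_div _ _ (ne_of_gt hu0) (ne_of_gt hv0), div_le_div_iff₀ (by positivity) (by positivity)]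
        have hfac : 0 ≤ (v - u) * (2*v^3 - u*v^2 - u^2*v) := by
          apply mul_nonneg (by linarith)
          nlinarith
        have hzero : v^2 - u^2 - 1 = 0 := by rw [hu2, hv2]; ring
        have h2 : u*v^3 - u^3*v - u*v = u*v*(v^2-u^2-1) := by ring
        rw [hzero, mul_zero] at h2
        nlinarith [hfac, h2]
      have hcast2 : Real.sqrt ((M:ℝ)+1) = Real.sqrt ((M+1:ℕ):ℝ) := by norm_num
      rw [hcast2] at key
      linarith

lemma tail_sum_bound' {N : ℕ} (hN : 1 ≤ N) (M : ℕ) :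
    ∑ m ∈ Finset.Ico (N+1) M, 1/((m:ℝ) * Real.sqrt m) ≤ 2/Real.sqrt N := by
  have hsN : 0 < Real.sqrt N := Real.sqrt_pos.2 (by exact_mod_cast hN)
  rcases le_or_gt M (N+1) with hM | hM
  · rw [Finset.Ico_eq_empty (by omega)]
    simp
    positivity
  · have hM' : N ≤ M - 1 := by omega
    have hMM : M = (M-1) + 1 := by omega
    rw [hMM]
    refine le_trans (tail_sum_bound hN (M-1) hM') ?_
    have : 0 ≤ 2/Real.sqrt ((M-1:ℕ):ℝ) := by positivity
    linarith

/-- If (K_m) and (b_m) are bounded and k_n = λ·∑_{m ≠ n} K_m b_m/(λ_m − λ_n + λ), then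
(k_n · n^ε) is bounded for every ε ∈ [0, 1/2). -/
theorem stmt15 (g h : ℝ) (hg : 0 < g) (hh : 0 < h)
    (lam : ℕ → ℂ)
    (hlam : ∀ n : ℕ, lam n =
      -Complex.I * Real.sqrt ((n : ℝ) * (g + (n : ℝ) ^ 2) * Real.tanh (h * n)))
    (lam0 : ℝ) (hlam0 : 0 < lam0)
    (K b : ℕ → ℂ) (MK Mb : ℝ)
    (hK : ∀ m, ‖K m‖ ≤ MK) (hb : ∀ m, ‖b m‖ ≤ Mb)
    (k : ℕ → ℂ)
    (hk : ∀ n : ℕ, 1 ≤ n → HasSum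
      (fun m : ℕ => if m = 0 ∨ m = n then 0
        else (lam0 : ℂ) * (K m * b m / (lam m - lam n + (lam0 : ℂ)))) (k n)) :
    ∀ ε : ℝ, 0 ≤ ε → ε < 1 / 2 →
      ∃ M : ℝ, ∀ n : ℕ, 1 ≤ n → ‖k n‖ * (n : ℝ) ^ ε ≤ M := by
  intro ε hε0 hε1
  -- constants
  set c : ℝ := Real.tanh h / (2 * Real.sqrt (g+1)) with hcdef
  have hth : 0 < Real.tanh h := by
    rw [Real.tanh_eq_sinh_div_cosh]
    exact div_pos (by rwa [Real.sinh_pos_iff]) (Real.cosh_pos _)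
  have hsg : 0 < Real.sqrt (g+1) := Real.sqrt_pos.2 (by linarith)
  have hc : 0 < c := by rw [hcdef]; positivity
  have hMK : 0 ≤ MK := le_trans (norm_nonneg _) (hK 0)
  have hMb : 0 ≤ Mb := le_trans (norm_nonneg _) (hb 0)
  set Q : ℝ := lam0 * (MK * Mb) with hQdef
  have hQ : 0 ≤ Q := by positivity
  -- denominators
  have hzeq : ∀ m n : ℕ, lam m - lam n + (lam0:ℂ)
      = (lam0:ℂ) + Complex.I * ((muF g h n - muF g h m : ℝ) : ℂ) := by
    intro m n
    rw [hlam, hlam, muF, muF]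
    push_cast
    ring
  have habsA : ∀ m n : ℕ, lam0 ≤ ‖lam m - lam n + (lam0:ℂ)‖ := by
    intro m n
    rw [hzeq]
    have := Complex.abs_re_le_norm ((lam0:ℂ) + Complex.I * ((muF g h n - muF g h m : ℝ) : ℂ))
    simpa using le_trans (le_abs_self _) this
  have habsB : ∀ m n : ℕ, |muF g h n - muF g h m|
      ≤ ‖lam m - lam n + (lam0:ℂ)‖ := by
    intro m n
    rw [hzeq]
    have := Complex.abs_im_le_norm ((lam0:ℂ) + Complex.I * ((muF g h n - muF g h m : ℝ) : ℂ))
    simpa using this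
  -- the bounding function
  set G : ℕ → ℕ → ℝ := fun n m => if m = 0 ∨ m = n then 0
    else if m ≤ 2*n then Q / (c/2 * (Real.sqrt n * |(m:ℝ) - n|))
    else Q / (c/4 * ((m:ℝ) * Real.sqrt m)) with hGdef
  have hGnonneg : ∀ n m, 0 ≤ G n m := by
    intro n m
    rw [hGdef]
    dsimp only
    split_ifs with h1 h2
    · exact le_refl 0
    all_goals positivity
  -- per-term bound
  have claim1 : ∀ n : ℕ, 1 ≤ n → ∀ m : ℕ,
      ‖(if m = 0 ∨ m = n then 0
        else (lam0 : ℂ) * (K m * b m / (lam m - lam n + (lam0 : ℂ))))‖ ≤ G n m := by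
    intro n hn m
    by_cases hm : m = 0 ∨ m = n
    · rw [if_pos hm]
      simpa using hGnonneg n m
    · rw [if_neg hm]
      push_neg at hm
      obtain ⟨hm0, hmn⟩ := hm
      have hm1 : 1 ≤ m := Nat.one_le_iff_ne_zero.mpr hm0
      set A : ℝ := ‖lam m - lam n + (lam0:ℂ)‖ with hAdef
      have hA0 : 0 < A := lt_of_lt_of_le hlam0 (habsA m n)
      have habs_eq : ‖(lam0 : ℂ) * (K m * b m / (lam m - lam n + (lam0 : ℂ)))‖
          = lam0 * (‖K m‖ * ‖b m‖) / A := by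
        rw [norm_mul, norm_div, norm_mul, Complex.norm_of_nonneg hlam0.le, ← hAdef]
        ring
      rw [habs_eq]
      have hstep1 : lam0 * (‖K m‖ * ‖b m‖) / A ≤ Q / A := by
        have h1 : ‖K m‖ * ‖b m‖ ≤ MK * Mb :=
          mul_le_mul (hK m) (hb m) (norm_nonneg _) hMK
        have h2 : lam0 * (‖K m‖ * ‖b m‖) ≤ Q := by
          rw [hQdef]; exact mul_le_mul_of_nonneg_left h1 hlam0.le
        gcongr
      refine le_trans hstep1 ?_
      rw [hGdef]
      dsimp only
      rw [if_neg (not_or.mpr ⟨hm0, hmn⟩)]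
      have hmnR : ((m:ℝ)) ≠ (n:ℝ) := by exact_mod_cast hmn
      by_cases hm2 : m ≤ 2*n
      · rw [if_pos hm2]
        have hBpos : 0 < c/2 * (Real.sqrt n * |(m:ℝ) - n|) := by
          have h3 : 0 < |(m:ℝ) - n| := abs_pos.2 (sub_ne_zero.2 hmnR)
          have h4 : 0 < Real.sqrt n := Real.sqrt_pos.2 (by exact_mod_cast hn)
          positivity
        have hB : c/2 * (Real.sqrt n * |(m:ℝ) - n|) ≤ A := by
          rcases lt_or_gt_of_ne hmn with hlt | hlt
          · have hd := mu_diff hg hh hm1 hlt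
            have habs : |(m:ℝ) - n| = (n:ℝ) - m := by
              rw [abs_sub_comm]
              exact abs_of_nonneg (by
                have : (m:ℝ) ≤ n := by exact_mod_cast hlt.le
                linarith)
            have hAB := le_trans (le_abs_self _) (habsB m n)
            rw [habs]
            calc c/2 * (Real.sqrt n * ((n:ℝ) - m)) = c * (((n:ℝ) - m) * Real.sqrt n / 2) := by ring
              _ ≤ muF g h n - muF g h m := hd
              _ ≤ A := hAB
          · have hd := mu_diff hg hh hn hlt
            have habs : |(m:ℝ) - n| = (m:ℝ) - n := by
              exact abs_of_nonneg (by
                have : (n:ℝ) ≤ m := by exact_mod_cast hlt.le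
                linarith)
            have hAB : muF g h m - muF g h n ≤ A := by
              refine le_trans ?_ (habsB m n)
              rw [abs_sub_comm]
              exact le_abs_self _
            have hsq : Real.sqrt n ≤ Real.sqrt m := by
              apply Real.sqrt_le_sqrt
              exact_mod_cast hlt.le
            have hmn' : (0:ℝ) ≤ (m:ℝ) - n := by
              have : (n:ℝ) ≤ m := by exact_mod_cast hlt.le
              linarith
            rw [habs]
            calc c/2 * (Real.sqrt n * ((m:ℝ) - n))
                ≤ c/2 * (Real.sqrt m * ((m:ℝ) - n)) := by
                  apply mul_le_mul_of_nonneg_left _ (by positivity)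
                  exact mul_le_mul_of_nonneg_right hsq hmn'
              _ = c * (((m:ℝ) - n) * Real.sqrt m / 2) := by ring
              _ ≤ muF g h m - muF g h n := hd
              _ ≤ A := hAB
        exact div_le_div_of_nonneg_left hQ hBpos hB
      · rw [if_neg hm2]
        push_neg at hm2
        have hlt : n < m := by omega
        have hd := mu_diff hg hh hn hlt
        have hAB : muF g h m - muF g h n ≤ A := by
          refine le_trans ?_ (habsB m n)
          rw [abs_sub_comm]
          exact le_abs_self _
        have hm2' : 2*(n:ℝ) + 1 ≤ m := by exact_mod_cast hm2
        have hsm : 0 < Real.sqrt m := Real.sqrt_pos.2 (by exact_mod_cast hm1)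
        have hBpos : 0 < c/4 * ((m:ℝ) * Real.sqrt m) := by
          have hm0' : (0:ℝ) < m := by exact_mod_cast hm1
          positivity
        have hB : c/4 * ((m:ℝ) * Real.sqrt m) ≤ A := by
          have hhalf : (m:ℝ)/2 ≤ (m:ℝ) - n := by linarith
          calc c/4 * ((m:ℝ) * Real.sqrt m) = c * (((m:ℝ)/2) * Real.sqrt m / 2) := by ring
            _ ≤ c * (((m:ℝ) - n) * Real.sqrt m / 2) := by
                apply mul_le_mul_of_nonneg_left _ hc.le
                have := mul_le_mul_of_nonneg_right hhalf hsm.le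
                linarith
            _ ≤ muF g h m - muF g h n := hd
            _ ≤ A := hAB
        exact div_le_div_of_nonneg_left hQ hBpos hB
  -- partial-sum bound
  have claim2 : ∀ n : ℕ, 1 ≤ n → ∀ s : Finset ℕ,
      ∑ m ∈ s, G n m ≤ (2*Q/c) * (1/Real.sqrt n) * (2*(1 + Real.log n))
        + (4*Q/c) * (2/Real.sqrt n) := by
    intro n hn s
    have hn0 : (0:ℝ) < n := by exact_mod_cast hn
    have hsn : 0 < Real.sqrt n := Real.sqrt_pos.2 hn0
    set M0 : ℕ := max (2*n+1) (s.sup id + 1) with hM0def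
    have hsub : s ⊆ Finset.range M0 := by
      intro x hx
      rw [Finset.mem_range]
      have hx1 : x ≤ s.sup id := Finset.le_sup (f := id) hx
      have := le_max_right (2*n+1) (s.sup id + 1)
      omega
    have h1 : ∑ m ∈ s, G n m ≤ ∑ m ∈ Finset.range M0, G n m :=
      Finset.sum_le_sum_of_subset_of_nonneg hsub (fun i _ _ => hGnonneg n i)
    have hM0 : 2*n+1 ≤ M0 := le_max_left _ _
    have hsplit : ∑ m ∈ Finset.range M0, G n m
        = ∑ m ∈ Finset.range (2*n+1), G n m + ∑ m ∈ Finset.Ico (2*n+1) M0, G n m := by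
      rw [Finset.range_eq_Ico, Finset.range_eq_Ico]
      exact (Finset.sum_Ico_consecutive _ (Nat.zero_le _) hM0).symm
    -- near part
    have hnear : ∑ m ∈ Finset.range (2*n+1), G n m
        ≤ (2*Q/c) * (1/Real.sqrt n) * (2*(1 + Real.log n)) := by
      set w : ℕ → ℝ := fun m => if m = 0 ∨ m = n then 0 else 1/|(m:ℝ) - n| with hwdef
      have hterm : ∀ m ∈ Finset.range (2*n+1), G n m ≤ (2*Q/c) * (1/Real.sqrt n) * w m := by
        intro m hm
        rw [Finset.mem_range] at hm
        have hm2 : m ≤ 2*n := by omega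
        rw [hGdef, hwdef]
        dsimp only
        by_cases hcase : m = 0 ∨ m = n
        · rw [if_pos hcase, if_pos hcase]
          simp
        · rw [if_neg hcase, if_neg hcase, if_pos hm2]
          push_neg at hcase
          have hmnR : ((m:ℝ)) ≠ (n:ℝ) := by exact_mod_cast hcase.2
          have hd : 0 < |(m:ℝ) - n| := abs_pos.2 (sub_ne_zero.2 hmnR)
          rw [le_iff_lt_or_eq]
          right
          field_simp
      refine le_trans (Finset.sum_le_sum hterm) ?_
      rw [← Finset.mul_sum]
      apply mul_le_mul_of_nonneg_left _ (by positivity)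
      -- ∑ w ≤ 2 (1 + log n)
      have hw1 : ∑ m ∈ Finset.range n, w m ≤ 1 + Real.log n := by
        have hle : ∀ m ∈ Finset.range n, w m ≤ 1/((n:ℝ) - m) := by
          intro m hm
          rw [Finset.mem_range] at hm
          have hmn' : (m:ℝ) < n := by exact_mod_cast hm
          rw [hwdef]
          dsimp only
          by_cases hcase : m = 0 ∨ m = n
          · rw [if_pos hcase]
            have hpos : (0:ℝ) < (n:ℝ) - m := by linarith
            positivity
          · rw [if_neg hcase]
            have : |(m:ℝ) - n| = (n:ℝ) - m := by
              rw [abs_sub_comm]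
              exact abs_of_nonneg (by linarith)
            rw [this]
        refine le_trans (Finset.sum_le_sum hle) ?_
        rw [sum_inv_reflect]
        exact harm_bound n
      have hw2 : ∑ m ∈ Finset.Ico n (2*n+1), w m ≤ 1 + Real.log n := by
        rw [Finset.sum_eq_sum_Ico_succ_bot (by omega : n < 2*n+1)]
        have hwn : w n = 0 := by rw [hwdef]; simp
        rw [hwn, zero_add]
        have hle : ∀ m ∈ Finset.Ico (n+1) (2*n+1), w m = 1/((m:ℝ) - n) := by
          intro m hm
          rw [Finset.mem_Ico] at hm
          have hne : ¬(m = 0 ∨ m = n) := by omega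
          rw [hwdef]
          dsimp only
          rw [if_neg hne]
          have hm' : (n:ℝ) < m := by exact_mod_cast hm.1
          rw [abs_of_nonneg (by linarith)]
        rw [Finset.sum_congr rfl hle, sum_inv_shift]
        exact harm_bound n
      have hsplit2 : ∑ m ∈ Finset.range (2*n+1), w m
          = ∑ m ∈ Finset.range n, w m + ∑ m ∈ Finset.Ico n (2*n+1), w m := by
        rw [Finset.range_eq_Ico, Finset.range_eq_Ico]
        exact (Finset.sum_Ico_consecutive _ (Nat.zero_le _) (by omega)).symm
      rw [hsplit2]
      linarith
    -- far part
    have hfar : ∑ m ∈ Finset.Ico (2*n+1) M0, G n m ≤ (4*Q/c) * (2/Real.sqrt n) := by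
      have hterm : ∀ m ∈ Finset.Ico (2*n+1) M0, G n m = (4*Q/c) * (1/((m:ℝ) * Real.sqrt m)) := by
        intro m hm
        rw [Finset.mem_Ico] at hm
        have hne : ¬(m = 0 ∨ m = n) := by omega
        have hgt : ¬(m ≤ 2*n) := by omega
        rw [hGdef]
        dsimp only
        rw [if_neg hne, if_neg hgt]
        have hm0' : (0:ℝ) < m := by
          have : 0 < m := by omega
          exact_mod_cast this
        have hsm : 0 < Real.sqrt m := Real.sqrt_pos.2 hm0'
        field_simp
      rw [Finset.sum_congr rfl hterm, ← Finset.mul_sum]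
      have htail : ∑ m ∈ Finset.Ico (2*n+1) M0, 1/((m:ℝ) * Real.sqrt m)
          ≤ 2/Real.sqrt (2*n : ℕ) := tail_sum_bound' (by omega) M0
      have hmono : 2/Real.sqrt ((2*n : ℕ):ℝ) ≤ 2/Real.sqrt n := by
        apply div_le_div_of_nonneg_left (by norm_num) hsn
        apply Real.sqrt_le_sqrt
        push_cast
        linarith
      have hQC : 0 ≤ 4*Q/c := by positivity
      calc (4*Q/c) * ∑ m ∈ Finset.Ico (2*n+1) M0, 1/((m:ℝ) * Real.sqrt m)
          ≤ (4*Q/c) * (2/Real.sqrt ((2*n : ℕ):ℝ)) := mul_le_mul_of_nonneg_left htail hQC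
        _ ≤ (4*Q/c) * (2/Real.sqrt n) := mul_le_mul_of_nonneg_left hmono hQC
    calc ∑ m ∈ s, G n m ≤ ∑ m ∈ Finset.range M0, G n m := h1
      _ = _ := hsplit
      _ ≤ _ := add_le_add hnear hfar
  -- assembly
  set δ : ℝ := 1/2 - ε with hδdef
  have hδ : 0 < δ := by rw [hδdef]; linarith
  refine ⟨(4*Q/c) * (1 + 1/δ) + (8*Q/c), ?_⟩
  intro n hn
  have hn0 : (0:ℝ) < n := by exact_mod_cast hn
  have hn1 : (1:ℝ) ≤ n := by exact_mod_cast hn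
  have hsn : 0 < Real.sqrt n := Real.sqrt_pos.2 hn0
  -- |k n| ≤ B n
  set Bn : ℝ := (2*Q/c) * (1/Real.sqrt n) * (2*(1 + Real.log n)) + (4*Q/c) * (2/Real.sqrt n)
    with hBndef
  have hkbound : ‖k n‖ ≤ Bn := by
    have hsum := hk n hn
    set F : ℕ → ℂ := fun m => if m = 0 ∨ m = n then 0
      else (lam0 : ℂ) * (K m * b m / (lam m - lam n + (lam0 : ℂ))) with hFdef
    have hFnorm : ∀ m, ‖F m‖ ≤ G n m := by
      intro m
      rw [hFdef]
      exact claim1 n hn m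
    have hGsum' : ∀ s : Finset ℕ, ∑ m ∈ s, ‖F m‖ ≤ Bn := by
      intro s
      refine le_trans (Finset.sum_le_sum (fun i _ => hFnorm i)) ?_
      rw [hBndef]
      exact claim2 n hn s
    have hsummable : Summable (fun m => ‖F m‖) :=
      summable_of_sum_le (fun m => norm_nonneg _) hGsum'
    rw [← hsum.tsum_eq]
    refine le_trans (norm_tsum_le_tsum_norm hsummable) ?_
    exact Summable.tsum_le_of_sum_range_le hsummable (fun N => hGsum' (Finset.range N))
  -- rpow estimates
  have hrpow0 : (0:ℝ) ≤ (n:ℝ) ^ ε := Real.rpow_nonneg hn0.le ε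
  set r : ℝ := (n:ℝ) ^ ε / Real.sqrt n with hrdef
  have hr_eq : r = (n:ℝ) ^ (ε - 1/2) := by
    rw [hrdef, Real.sqrt_eq_rpow, ← Real.rpow_sub hn0]
  have hr0 : 0 ≤ r := by rw [hr_eq]; positivity
  have hr1 : r ≤ 1 := by
    rw [hr_eq]
    exact Real.rpow_le_one_of_one_le_of_nonpos hn1 (by linarith)
  have hlog0 : 0 ≤ Real.log n := Real.log_nonneg hn1
  have hlogr : Real.log n * r ≤ 1/δ := by
    have hlog_le : Real.log n ≤ (n:ℝ)^δ / δ := by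
      have h1 : Real.log ((n:ℝ)^δ) = δ * Real.log n := Real.log_rpow hn0 δ
      have h2 : Real.log ((n:ℝ)^δ) ≤ (n:ℝ)^δ - 1 :=
        Real.log_le_sub_one_of_pos (Real.rpow_pos_of_pos hn0 δ)
      have h3 : 0 < (n:ℝ)^δ := Real.rpow_pos_of_pos hn0 δ
      rw [le_div_iff₀ hδ]
      nlinarith
    have hmul : (n:ℝ)^δ * r = 1 := by
      rw [hr_eq, ← Real.rpow_add hn0]
      have : δ + (ε - 1/2) = 0 := by rw [hδdef]; ring
      rw [this, Real.rpow_zero]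
    calc Real.log n * r ≤ ((n:ℝ)^δ / δ) * r := mul_le_mul_of_nonneg_right hlog_le hr0
      _ = ((n:ℝ)^δ * r) / δ := by ring
      _ = 1/δ := by rw [hmul]
  -- finish
  have hfin : ‖k n‖ * (n:ℝ)^ε ≤ Bn * (n:ℝ)^ε :=
    mul_le_mul_of_nonneg_right hkbound hrpow0
  refine le_trans hfin ?_
  have hBexp : Bn * (n:ℝ)^ε = (4*Q/c) * (r + Real.log n * r) + (8*Q/c) * r := by
    rw [hBndef, hrdef]
    field_simp
    ring
  rw [hBexp]
  have hQC : 0 ≤ Q/c := by positivity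
  have t1 : (4*Q/c) * (r + Real.log n * r) ≤ (4*Q/c) * (1 + 1/δ) := by
    apply mul_le_mul_of_nonneg_left _ (by positivity)
    linarith
  have t2 : (8*Q/c) * r ≤ (8*Q/c) := by
    have := mul_le_mul_of_nonneg_left hr1 (by positivity : (0:ℝ) ≤ 8*Q/c)
    linarith
  linarith
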